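/- Let X = {x_0, ..., x_n} ⊂ R^d be affinely dependent with convex hull of dimension m. Then there exist real numbers ε_0, ..., ε_n such that the lifted set Y = {(x_i, ε_i)} ⊂ R^{d+1} satisfies dim(Conv Y) = m + 1. -/
import Mathlib

open scoped Classical

open Finset Module Submodule LinearMap

/-- Let `X ⊂ ℝ^d` be a finite affinely dependent set whose convex hull has dimension `m`.
Then there exists a lift `q ↦ (q, ε q)` of the points of `X` to `ℝ^{d+1}` such that the
convex hull of the lifted set has dimension `m + 1`. -/
theorem exists_lift_dim_succ {d m : ℕ} (X : Finset (Fin d → ℝ))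
    (hdep : ¬ AffineIndependent ℝ (Subtype.val : {y // y ∈ X} → (Fin d → ℝ)))
    (hm : Module.finrank ℝ (vectorSpan ℝ (X : Set (Fin d → ℝ))) = m) :
    ∃ ε : (Fin d → ℝ) → ℝ,
      Module.finrank ℝ
          (vectorSpan ℝ ((fun q => (q, ε q)) '' (X : Set (Fin d → ℝ)))) = m + 1 := by
  -- get a nontrivial affine relation
  obtain ⟨f, hf0, hfs, p, hpX, hfp⟩ :=
    exists_nontrivial_relation_sum_zero_of_not_affine_ind (k := ℝ) hdep
  set S : Finset (Fin d → ℝ) := X.erase p with hS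
  -- `p` lies in the affine span of the other points
  have hpspan : p ∈ affineSpan ℝ (S : Set (Fin d → ℝ)) := by
    have h1 : ∑ e ∈ S, f e = -(f p) := by
      have := Finset.add_sum_erase X f hpX
      linarith [this.symm ▸ hfs]
    have hw : ∑ e : {x // x ∈ S}, (-(f ↑e) / f p) = 1 := by
      rw [Finset.sum_coe_sort S (fun e => -(f e) / f p), ← Finset.sum_div,
        Finset.sum_neg_distrib, h1, neg_neg, div_self hfp]
    have hw' : ∑ e ∈ (Finset.univ : Finset {x // x ∈ S}), (-(f ↑e) / f p) = 1 := hw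
    have hmem := affineCombination_mem_affineSpan (k := ℝ) hw'
        (Subtype.val : {x // x ∈ S} → (Fin d → ℝ))
    have hv : (Finset.univ : Finset {x // x ∈ S}).affineCombination ℝ
        (Subtype.val : {x // x ∈ S} → (Fin d → ℝ)) (fun e => -(f ↑e) / f p) = p := by
      rw [Finset.affineCombination_eq_linear_combination _ _ _ hw']
      have h2 : ∑ e ∈ S, f e • e = -(f p • p) := by
        have h3 := Finset.add_sum_erase X (fun e => f e • e) hpX
        have h4 : f p • p + ∑ e ∈ S, f e • e = 0 := by rw [h3]; exact hf0
        linear_combination (norm := module) h4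
      have hc : ∑ e : {x // x ∈ S}, (-(f ↑e) / f p) • (e : Fin d → ℝ)
          = ∑ e ∈ S, (-(f e) / f p) • e :=
        Finset.sum_coe_sort S (fun e => (-(f e) / f p) • e)
      rw [hc]
      have hstep : ∀ e ∈ S, (-(f e) / f p) • e = (f p)⁻¹ • (-(f e • e)) := by
        intro e _
        simp only [div_eq_mul_inv, neg_smul, mul_smul, smul_neg]
        rw [smul_comm]
      rw [Finset.sum_congr rfl hstep, ← Finset.smul_sum, Finset.sum_neg_distrib, h2, neg_neg,
        smul_smul, inv_mul_cancel₀ hfp, one_smul]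
    rw [hv, Subtype.range_coe] at hmem
    exact hmem
  -- S is nonempty
  obtain ⟨q, hqS⟩ : S.Nonempty := by
    by_contra h
    rw [Finset.not_nonempty_iff_eq_empty] at h
    rw [h] at hpspan
    rw [Finset.coe_empty, AffineSubspace.span_empty] at hpspan
    exact AffineSubspace.notMem_bot ℝ (Fin d → ℝ) p hpspan
  have hqp : q ≠ p := Finset.ne_of_mem_erase hqS
  have hqX : q ∈ X := Finset.mem_of_mem_erase hqS
  -- the lift
  refine ⟨fun x => if x = p then 1 else 0, ?_⟩
  set ε : (Fin d → ℝ) → ℝ := fun x => if x = p then 1 else 0 with hε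
  set Y : Set ((Fin d → ℝ) × ℝ) := (fun q => (q, ε q)) '' (X : Set (Fin d → ℝ)) with hY
  set V : Submodule ℝ ((Fin d → ℝ) × ℝ) := vectorSpan ℝ Y with hV
  -- membership of lifted points
  have hmemY : ∀ x ∈ X, ((x, ε x) : (Fin d → ℝ) × ℝ) ∈ Y := fun x hx =>
    Set.mem_image_of_mem _ hx
  -- differences of lifted points of S, with second coordinate 0
  have hSdiff : ∀ a ∈ S, ∀ b ∈ S, ((a - b, (0:ℝ)) : (Fin d → ℝ) × ℝ) ∈ V := by
    intro a ha b hb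
    have h1 := vsub_mem_vectorSpan ℝ (hmemY a (Finset.mem_of_mem_erase ha))
      (hmemY b (Finset.mem_of_mem_erase hb))
    have hea : ε a = 0 := by simp [hε, Finset.ne_of_mem_erase ha]
    have heb : ε b = 0 := by simp [hε, Finset.ne_of_mem_erase hb]
    simpa [Prod.ext_iff, hea, heb] using h1
  -- the inl image of vectorSpan S lies in V
  have hmapS : Submodule.map (LinearMap.inl ℝ (Fin d → ℝ) ℝ) (vectorSpan ℝ (S : Set (Fin d → ℝ)))
      ≤ V := by
    rw [Submodule.map_le_iff_le_comap, vectorSpan_def, Submodule.span_le]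
    rintro v ⟨a, ha, b, hb, rfl⟩
    exact hSdiff a ha b hb
  -- (p - q, 0) ∈ V
  have hpq0 : ((p - q, (0:ℝ)) : (Fin d → ℝ) × ℝ) ∈ V := by
    apply hmapS
    refine ⟨p - q, ?_, rfl⟩
    have hq' : q ∈ affineSpan ℝ (S : Set (Fin d → ℝ)) := mem_affineSpan ℝ hqS
    have := AffineSubspace.vsub_mem_direction hpspan hq'
    rwa [direction_affineSpan] at this
  -- (0, 1) ∈ V
  have h01 : (((0 : Fin d → ℝ), (1:ℝ)) : (Fin d → ℝ) × ℝ) ∈ V := by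
    have h1 := vsub_mem_vectorSpan ℝ (hmemY p hpX) (hmemY q hqX)
    have hep : ε p = 1 := by simp [hε]
    have heq : ε q = 0 := by simp [hε, hqp]
    rw [hep, heq] at h1
    have : (((0 : Fin d → ℝ), (1:ℝ)) : (Fin d → ℝ) × ℝ)
        = ((p, (1:ℝ)) -ᵥ (q, (0:ℝ))) - (p - q, (0:ℝ)) := by
      simp [Prod.ext_iff]
    rw [this]
    exact sub_mem h1 hpq0
  -- second coordinates
  have hsnd : ∀ t : ℝ, (((0 : Fin d → ℝ), t) : (Fin d → ℝ) × ℝ) ∈ V := by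
    intro t
    have := V.smul_mem t h01
    simpa using this
  -- the key equality
  have hVeq : V = (vectorSpan ℝ (X : Set (Fin d → ℝ))).prod (⊤ : Submodule ℝ ℝ) := by
    apply le_antisymm
    · rw [hV, vectorSpan_def, Submodule.span_le]
      rintro v ⟨a, ⟨a', ha', rfl⟩, b, ⟨b', hb', rfl⟩, rfl⟩
      exact ⟨vsub_mem_vectorSpan ℝ ha' hb', trivial⟩
    · rw [LinearMap.prod_eq_sup_map, sup_le_iff]
      constructor
      · rw [Submodule.map_le_iff_le_comap, vectorSpan_def, Submodule.span_le]
        rintro v ⟨a, ha, b, hb, rfl⟩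
        have h1 := vsub_mem_vectorSpan ℝ (hmemY a ha) (hmemY b hb)
        have : ((a - b, (0:ℝ)) : (Fin d → ℝ) × ℝ)
            = ((a, ε a) -ᵥ (b, ε b)) - (0, ε a - ε b) := by
          simp [Prod.ext_iff]
        show ((a -ᵥ b, (0:ℝ)) : (Fin d → ℝ) × ℝ) ∈ V
        rw [show (a -ᵥ b) = a - b from rfl, this]
        exact sub_mem h1 (hsnd _)
      · rw [Submodule.map_le_iff_le_comap]
        rintro t -
        simpa using hsnd t
  -- finrank computation
  rw [hVeq, LinearMap.prod_eq_sup_map]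
  have hinf : Submodule.map (LinearMap.inl ℝ (Fin d → ℝ) ℝ)
        (vectorSpan ℝ (X : Set (Fin d → ℝ))) ⊓
      Submodule.map (LinearMap.inr ℝ (Fin d → ℝ) ℝ) (⊤ : Submodule ℝ ℝ) = ⊥ := by
    rw [Submodule.map_inl, Submodule.map_inr, Submodule.prod_inf_prod]
    simp
  have h1 : Module.finrank ℝ (Submodule.map (LinearMap.inl ℝ (Fin d → ℝ) ℝ)
      (vectorSpan ℝ (X : Set (Fin d → ℝ)))) = m := by
    rw [← hm]
    exact (Submodule.equivMapOfInjective _ LinearMap.inl_injective _).finrank_eq.symm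
  have h2 : Module.finrank ℝ (Submodule.map (LinearMap.inr ℝ (Fin d → ℝ) ℝ)
      (⊤ : Submodule ℝ ℝ)) = 1 := by
    rw [← (Submodule.equivMapOfInjective (LinearMap.inr ℝ (Fin d → ℝ) ℝ)
      LinearMap.inr_injective (⊤ : Submodule ℝ ℝ)).finrank_eq, finrank_top]
    exact Module.finrank_self ℝ
  have := Submodule.finrank_sup_add_finrank_inf_eq
    (Submodule.map (LinearMap.inl ℝ (Fin d → ℝ) ℝ) (vectorSpan ℝ (X : Set (Fin d → ℝ))))
    (Submodule.map (LinearMap.inr ℝ (Fin d → ℝ) ℝ) (⊤ : Submodule ℝ ℝ))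
  rw [hinf, h1, h2, finrank_bot, add_zero] at this
  exact this
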